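/- Let g ∈ L¹(ℝ²) with Fourier transform 𝓕g(ω) = G(‖ω‖), where G : [0,∞) → [0,∞) is antitone (nonincreasing). Let Ξ ⊂ ℝ² be a finite set of central frequencies and J ∈ ℕ. For 0 ≤ j < J and ζ ∈ Ξ define the dilated odd Gabor wavelets ψ_{j,ζ}(u) = 2^{−2j} g(2^{−j}u) sin(⟨ζ, 2^{−j}u⟩). Let φ, h ∈ L¹(ℝ²) and assume the lower frame bound: for every ω ∈ ℝ², |𝓕φ(ω)|² + |𝓕h(ω)|² + Σ_{j<J, ζ∈Ξ} |𝓕ψ_{j,ζ}(ω)|² > 0. If x, y ∈ L¹(ℝ²) satisfy x ∗ φ = y ∗ φ, x ∗ h = y ∗ h, and x ∗ (Σ_{j<J} ψ_{j,ζ}) = y ∗ (Σ_{j<J} ψ_{j,ζ}) almost everywhere for every ζ ∈ Ξ, then x = y almost everywhere. That is, summing the odd Gabor wavelets over dyadic scales preserves invertibility of the filter bank. -/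

import Mathlib

open MeasureTheory
open scoped RealInnerProductSpace

/-- The Fourier transform on `ℝ²` with convention `𝓕f(ω) = ∫ f(u) e^{−i⟨u,ω⟩} du`. -/
noncomputable def fourier2 (f : EuclideanSpace ℝ (Fin 2) → ℝ)
    (ω : EuclideanSpace ℝ (Fin 2)) : ℂ :=
  ∫ u : EuclideanSpace ℝ (Fin 2), (f u : ℂ) * Complex.exp (-Complex.I * (⟪u, ω⟫ : ℂ))

/-- Convolution on `ℝ²`: `(f ∗ g)(u) = ∫ f(u−t) g(t) dt`. -/
noncomputable def conv2 (f g : EuclideanSpace ℝ (Fin 2) → ℝ)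
    (u : EuclideanSpace ℝ (Fin 2)) : ℝ :=
  ∫ t : EuclideanSpace ℝ (Fin 2), f (u - t) * g t

namespace GaborAux

open FourierTransform Real Complex

abbrev E2 := EuclideanSpace ℝ (Fin 2)

noncomputable def char (ω : E2) (u : E2) : ℂ := Complex.exp (-Complex.I * (⟪u, ω⟫ : ℂ))

lemma char_cont (ω : E2) : Continuous (char ω) := by
  have hc : Continuous fun u : E2 => (⟪u, ω⟫ : ℝ) :=
    continuous_inner.comp (continuous_id.prodMk continuous_const)
  exact Complex.continuous_exp.comp (continuous_const.mul (Complex.continuous_ofReal.comp hc))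

lemma char_norm (ω : E2) (u : E2) : ‖char ω u‖ = 1 := by
  rw [char, Complex.norm_exp]
  have : (-Complex.I * (⟪u, ω⟫ : ℂ)).re = 0 := by simp
  rw [this]; exact Real.exp_zero

lemma char_add (ω : E2) (u t : E2) : char ω (u + t) = char ω u * char ω t := by
  rw [char, char, char, ← Complex.exp_add]
  congr 1
  rw [inner_add_left]
  push_cast
  ring

lemma fourier2_eq_char (f : E2 → ℝ) (ω : E2) :
    fourier2 f ω = ∫ u, (f u : ℂ) * char ω u := rfl

lemma integrable_kernel {f : E2 → ℝ} (hf : Integrable f) (ω : E2) :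
    Integrable (fun u => (f u : ℂ) * char ω u) := by
  have := hf.ofReal.bdd_mul (f := char ω) (char_cont ω).aestronglyMeasurable
    (Filter.Eventually.of_forall fun u => (char_norm ω u).le)
  simpa [mul_comm] using this

lemma finrank_E2 : Module.finrank ℝ E2 = 2 := finrank_euclideanSpace_fin

/-- `fourier2` only depends on the a.e. class. -/
lemma fourier2_congr_ae {f k : E2 → ℝ} (h : ∀ᵐ u, f u = k u) (ω : E2) :
    fourier2 f ω = fourier2 k ω := by
  rw [fourier2_eq_char, fourier2_eq_char]
  apply integral_congr_ae
  filter_upwards [h] with u hu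
  rw [hu]

lemma fourier2_sub {f k : E2 → ℝ} (hf : Integrable f) (hk : Integrable k) (ω : E2) :
    fourier2 (fun u => f u - k u) ω = fourier2 f ω - fourier2 k ω := by
  rw [fourier2_eq_char, fourier2_eq_char, fourier2_eq_char,
    ← integral_sub (integrable_kernel hf ω) (integrable_kernel hk ω)]
  congr 1 with u
  push_cast
  ring

lemma fourier2_finset_sum (s : Finset ℕ) (F : ℕ → E2 → ℝ)
    (hF : ∀ j ∈ s, Integrable (F j)) (ω : E2) :
    fourier2 (fun v => ∑ j ∈ s, F j v) ω = ∑ j ∈ s, fourier2 (F j) ω := by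
  rw [fourier2_eq_char]
  have heq : (fun u => ((∑ j ∈ s, F j u : ℝ) : ℂ) * char ω u)
      = fun u => ∑ j ∈ s, ((F j u : ℂ) * char ω u) := by
    funext u
    push_cast
    rw [Finset.sum_mul]
  rw [heq, integral_finset_sum s (fun j hj => integrable_kernel (hF j hj) ω)]
  exact Finset.sum_congr rfl fun j _ => (fourier2_eq_char (F j) ω).symm

/-- the bridge to Mathlib's Fourier transform -/
lemma fourierIntegral_eq_fourier2 (f : E2 → ℝ) (w : E2) :
    𝓕 (fun u => (f u : ℂ)) w = fourier2 f ((2 * π) • w) := by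
  rw [Real.fourier_eq']
  unfold fourier2
  congr 1
  ext v
  rw [smul_eq_mul, mul_comm]
  congr 1
  rw [real_inner_smul_right]
  push_cast
  ring_nf

section Schwartz

variable {V : Type*} [NormedAddCommGroup V] [InnerProductSpace ℝ V]
  [FiniteDimensional ℝ V] [MeasurableSpace V] [BorelSpace V]

/-- A smooth compactly supported real function, as a complex-valued Schwartz map. -/
noncomputable def toSchwartzC (g : V → ℝ) (hg : ContDiff ℝ (⊤ : ℕ∞) g)
    (hsupp : HasCompactSupport g) : SchwartzMap V ℂ where
  toFun := fun u => (g u : ℂ)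
  smooth' := Complex.ofRealCLM.contDiff.comp hg
  decay' := by
    intro k n
    have hsupp' : HasCompactSupport (fun u => (g u : ℂ)) :=
      hsupp.comp_left (g := fun r : ℝ => (r : ℂ)) (by simp)
    have hsm : ContDiff ℝ (⊤ : ℕ∞) fun u => (g u : ℂ) := Complex.ofRealCLM.contDiff.comp hg
    have h1 : Continuous fun x => ‖x‖ ^ k * ‖iteratedFDeriv ℝ n (fun u => (g u : ℂ)) x‖ := by
      apply ((continuous_norm.pow k).mul (Continuous.norm ?_))
      exact hsm.continuous_iteratedFDeriv (by exact_mod_cast le_top)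
    have h2 : HasCompactSupport fun x =>
        ‖x‖ ^ k * ‖iteratedFDeriv ℝ n (fun u => (g u : ℂ)) x‖ := by
      apply HasCompactSupport.mul_left
      exact (hsupp'.iteratedFDeriv n).norm
    obtain ⟨C, hC⟩ := h1.bounded_above_of_compact_support h2
    refine ⟨C, fun x => ?_⟩
    have := hC x
    rwa [Real.norm_of_nonneg (mul_nonneg (pow_nonneg (norm_nonneg _) _) (norm_nonneg _))]
      at this

@[simp] lemma toSchwartzC_apply (g : V → ℝ) (hg : ContDiff ℝ (⊤ : ℕ∞) g)
    (hsupp : HasCompactSupport g) (u : V) : toSchwartzC g hg hsupp u = (g u : ℂ) := rfl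

lemma innerl_flip : (innerₗ V).flip = innerₗ V := by
  apply LinearMap.ext; intro v; apply LinearMap.ext; intro w
  simpa using real_inner_comm w v

/-- Injectivity of the Fourier transform on L¹ real functions. -/
lemma ae_zero_of_fourier_zero {f : V → ℝ} (hf : Integrable f)
    (h0 : ∀ w, 𝓕 (fun u => (f u : ℂ)) w = 0) : ∀ᵐ u, f u = 0 := by
  apply ae_eq_zero_of_integral_contDiff_smul_eq_zero
    (hf.locallyIntegrable) (fun g hgsm hgsupp => ?_)
  set g' : SchwartzMap V ℂ := toSchwartzC g (by exact_mod_cast hgsm) hgsupp with hg'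
  set h := (FourierTransform.fourierCLE ℂ (SchwartzMap V ℂ) (F := SchwartzMap V ℂ)).symm g' with hh
  have hfour : 𝓕 (⇑h) = ⇑g' := by
    rw [← SchwartzMap.fourier_coe, hh, FourierTransform.fourierCLE_symm_apply,
      FourierTransform.fourier_fourierInv_eq]
  have flip : ∫ ξ, (𝓕 (⇑h)) ξ • ((fun u => (f u : ℂ)) ξ) =
      ∫ v, h v • (𝓕 (fun u => (f u : ℂ))) v := by
    have := VectorFourier.integral_fourierIntegral_smul_eq_flip
      (L := innerₗ V) (μ := volume) (ν := volume) (F := ℂ)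
      Real.continuous_fourierChar continuous_inner (h.integrable) (hf.ofReal)
    rw [innerl_flip] at this
    exact this
  have hz : ∫ ξ, (g' ξ) • ((f ξ : ℂ)) = 0 := by
    rw [← hfour, flip]
    simp [h0]
  have h1 : ((∫ x, g x • f x : ℝ) : ℂ) = ∫ x, ((g x • f x : ℝ) : ℂ) :=
    (integral_ofReal (𝕜 := ℂ)).symm
  have heq : ((∫ x, g x • f x : ℝ) : ℂ) = ∫ ξ, (g' ξ) • ((f ξ : ℂ)) := by
    rw [h1]
    congr 1 with ξ
    push_cast
    simp [hg', toSchwartzC_apply, smul_eq_mul]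
  have hre : ((∫ x, g x • f x : ℝ) : ℂ) = 0 := by rw [heq, hz]
  exact_mod_cast hre

end Schwartz

/-- Convolution theorem for `fourier2`/`conv2`. -/
theorem fourier2_conv2 {f k : E2 → ℝ} (hf : Integrable f) (hk : Integrable k) (ω : E2) :
    fourier2 (conv2 f k) ω = fourier2 f ω * fourier2 k ω := by
  have hint : Integrable (fun p : E2 × E2 => f (p.1 - p.2) * k p.2)
      (volume.prod volume) := by
    have := hk.convolution_integrand (ContinuousLinearMap.mul ℝ ℝ) hf
    simpa [mul_comm] using this
  have hK : Integrable (fun p : E2 × E2 => ((f (p.1 - p.2) * k p.2 : ℝ) : ℂ) * char ω p.1)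
      (volume.prod volume) := by
    have h1 : Integrable (fun p : E2 × E2 => ((f (p.1 - p.2) * k p.2 : ℝ) : ℂ))
        (volume.prod volume) := hint.ofReal
    have h2 := h1.bdd_mul (f := fun p : E2 × E2 => char ω p.1)
      ((char_cont ω).comp continuous_fst).aestronglyMeasurable
      (Filter.Eventually.of_forall fun p => (char_norm ω p.1).le)
    simpa [mul_comm] using h2
  calc fourier2 (conv2 f k) ω
      = ∫ u, ∫ t, ((f (u - t) * k t : ℝ) : ℂ) * char ω u := by
        rw [fourier2_eq_char]
        congr 1 with u
        rw [show ((conv2 f k u : ℝ) : ℂ) = ∫ t, ((f (u - t) * k t : ℝ) : ℂ) from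
          (integral_ofReal (𝕜 := ℂ)).symm]
        rw [← integral_mul_const]
    _ = ∫ t, ∫ u, ((f (u - t) * k t : ℝ) : ℂ) * char ω u := integral_integral_swap hK
    _ = ∫ t, ((k t : ℂ) * char ω t) * fourier2 f ω := by
        congr 1 with t
        have subst : ∫ u, ((f (u - t) * k t : ℝ) : ℂ) * char ω u
            = ∫ u, ((f u * k t : ℝ) : ℂ) * char ω (u + t) := by
          rw [← integral_add_right_eq_self
            (fun u => ((f (u - t) * k t : ℝ) : ℂ) * char ω u) t]
          simp
        rw [subst]
        rw [show (fun u => ((f u * k t : ℝ) : ℂ) * char ω (u + t))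
            = fun u => ((k t : ℂ) * char ω t) * ((f u : ℂ) * char ω u) from ?_]
        · rw [integral_const_mul, fourier2_eq_char]
        · funext u
          rw [char_add]
          push_cast
          ring
    _ = fourier2 f ω * fourier2 k ω := by
        rw [integral_mul_const, ← fourier2_eq_char, mul_comm]

/-- the sin splitting: `𝓕 (g·sin⟨ζ,·⟩)(ω) = (𝓕g(ω−ζ) − 𝓕g(ω+ζ))/(2i)` -/
lemma fourier_sin_split {g : E2 → ℝ} (hg : Integrable g) (ζ ω : E2) :
    ∫ v, (g v : ℂ) * (Real.sin ⟪ζ, v⟫ : ℂ) * char ω v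
      = (fourier2 g (ω - ζ) - fourier2 g (ω + ζ)) / (2 * Complex.I) := by
  have key : ∀ v : E2, (g v : ℂ) * (Real.sin ⟪ζ, v⟫ : ℂ) * char ω v
      = ((g v : ℂ) * char (ω - ζ) v - (g v : ℂ) * char (ω + ζ) v) / (2 * Complex.I) := by
    intro v
    have hsin : (Real.sin ⟪ζ, v⟫ : ℂ)
        = (Complex.exp (Complex.I * (⟪ζ, v⟫ : ℝ)) -
            Complex.exp (-Complex.I * (⟪ζ, v⟫ : ℝ))) / (2 * Complex.I) := by
      rw [Complex.ofReal_sin, Complex.sin]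
      field_simp
      ring_nf
      rw [Complex.I_sq]
      ring
    have h1 : char (ω - ζ) v = Complex.exp (Complex.I * (⟪ζ, v⟫ : ℝ)) * char ω v := by
      rw [char, char, ← Complex.exp_add]
      congr 1
      rw [inner_sub_right, real_inner_comm v ζ]
      push_cast
      ring
    have h2 : char (ω + ζ) v = Complex.exp (-Complex.I * (⟪ζ, v⟫ : ℝ)) * char ω v := by
      rw [char, char, ← Complex.exp_add]
      congr 1
      rw [inner_add_right, real_inner_comm v ζ]
      push_cast
      ring
    rw [hsin, h1, h2]
    ring
  rw [show (fun v => (g v : ℂ) * (Real.sin ⟪ζ, v⟫ : ℂ) * char ω v)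
      = fun v => ((g v : ℂ) * char (ω - ζ) v - (g v : ℂ) * char (ω + ζ) v) / (2 * Complex.I)
      from funext key]
  rw [integral_div, integral_sub (integrable_kernel hg _) (integrable_kernel hg _),
    fourier2_eq_char, fourier2_eq_char]

/-- Fourier transform of the dilated odd Gabor wavelet. -/
lemma fourier2_psi {g : E2 → ℝ} (hg : Integrable g) (j : ℕ) (ζ ω : E2) :
    fourier2 (fun u => ((2 : ℝ) ^ (2 * j))⁻¹ * g (((2 : ℝ) ^ j)⁻¹ • u)
        * Real.sin ⟪ζ, ((2 : ℝ) ^ j)⁻¹ • u⟫) ω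
      = (fourier2 g (((2 : ℝ) ^ j) • ω - ζ) - fourier2 g (((2 : ℝ) ^ j) • ω + ζ))
          / (2 * Complex.I) := by
  set c : ℝ := (2 : ℝ) ^ j with hc
  have hc0 : (0 : ℝ) < c := by positivity
  have hpow : ((2 : ℝ) ^ (2 * j)) = c ^ 2 := by
    rw [hc, ← pow_mul, Nat.mul_comm]
  set H : E2 → ℂ := fun v => ((c ^ 2 : ℝ) : ℂ)⁻¹ * (g v : ℂ) * (Real.sin ⟪ζ, v⟫ : ℂ)
      * char (c • ω) v with hH
  have step1 : fourier2 (fun u => ((2 : ℝ) ^ (2 * j))⁻¹ * g (c⁻¹ • u)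
      * Real.sin ⟪ζ, c⁻¹ • u⟫) ω = ∫ u, H (c⁻¹ • u) := by
    rw [fourier2_eq_char]
    congr 1 with u
    simp only [hH]
    have : char (c • ω) (c⁻¹ • u) = char ω u := by
      rw [char, char]
      congr 2
      rw [real_inner_smul_left, real_inner_smul_right, ← mul_assoc,
        inv_mul_cancel₀ hc0.ne', one_mul]
    rw [this, hpow]
    push_cast
    ring
  have step2 : ∫ u, H (c⁻¹ • u)
      = ∫ v, (g v : ℂ) * (Real.sin ⟪ζ, v⟫ : ℂ) * char (c • ω) v := by
    rw [MeasureTheory.Measure.integral_comp_smul volume H c⁻¹, finrank_E2]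
    rw [inv_pow, inv_inv, abs_of_pos (by positivity : (0:ℝ) < c ^ 2)]
    rw [← integral_smul]
    congr 1 with v
    simp only [hH, Complex.real_smul]
    push_cast
    have : ((c : ℂ) ^ 2) ≠ 0 := by
      norm_cast
      positivity
    field_simp
    have hc' : (c : ℂ) ≠ 0 := by exact_mod_cast hc0.ne'
    rw [div_eq_iff hc']
    ring
  rw [step1, step2, fourier_sin_split hg]

/-- Integrability of the dilated Gabor wavelet. -/
lemma integrable_psi {g : E2 → ℝ} (hg : Integrable g) (j : ℕ) (ζ : E2) :
    Integrable (fun u => ((2 : ℝ) ^ (2 * j))⁻¹ * g (((2 : ℝ) ^ j)⁻¹ • u)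
      * Real.sin ⟪ζ, ((2 : ℝ) ^ j)⁻¹ • u⟫) := by
  set c : ℝ := (2 : ℝ) ^ j with hc
  have hc0 : (0 : ℝ) < c := by positivity
  have h1 : Integrable (fun u : E2 => g (c⁻¹ • u)) :=
    hg.comp_smul (inv_ne_zero hc0.ne')
  have hcont : Continuous fun u : E2 => Real.sin ⟪ζ, c⁻¹ • u⟫ := by
    apply Real.continuous_sin.comp
    exact continuous_inner.comp (continuous_const.prodMk (continuous_const_smul _))
  have h2 := (h1.const_mul ((2 : ℝ) ^ (2 * j))⁻¹).bdd_mul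
    hcont.aestronglyMeasurable (Filter.Eventually.of_forall fun u => by
      rw [Real.norm_eq_abs]; exact Real.abs_sin_le_one _)
  exact h2.congr (Filter.Eventually.of_forall (fun u => by ring))

/-- The sign argument: summing over scales cannot create cancellation. -/
lemma sum_sign {G : ℝ → ℝ} (hmono : AntitoneOn G (Set.Ici 0)) (J : ℕ) (ω ζ : E2)
    (j₀ : ℕ) (hj₀ : j₀ ∈ Finset.range J)
    (hne : G ‖((2:ℝ)^j₀) • ω - ζ‖ ≠ G ‖((2:ℝ)^j₀) • ω + ζ‖) :
    (∑ j ∈ Finset.range J, (G ‖((2:ℝ)^j) • ω - ζ‖ - G ‖((2:ℝ)^j) • ω + ζ‖)) ≠ 0 := by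
  have key : ∀ (c : ℝ), 0 < c → 0 ≤ ⟪ω, ζ⟫ → ‖c • ω - ζ‖ ≤ ‖c • ω + ζ‖ := by
    intro c hcpos ht
    have h1 := norm_sub_sq_real (c • ω) ζ
    have h2 := norm_add_sq_real (c • ω) ζ
    have h3 : ⟪c • ω, ζ⟫ = c * ⟪ω, ζ⟫ := real_inner_smul_left ω ζ c
    nlinarith [norm_nonneg (c • ω - ζ), norm_nonneg (c • ω + ζ),
      mul_nonneg hcpos.le ht]
  rcases le_total 0 (⟪ω, ζ⟫ : ℝ) with ht | ht
  · -- each term nonneg, term j₀ positive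
    have hterm : ∀ j : ℕ, 0 ≤ G ‖((2:ℝ)^j) • ω - ζ‖ - G ‖((2:ℝ)^j) • ω + ζ‖ := by
      intro j
      have := key ((2:ℝ)^j) (by positivity) ht
      have := hmono (Set.mem_Ici.2 (norm_nonneg _)) (Set.mem_Ici.2 (norm_nonneg _)) this
      linarith
    have hpos : 0 < G ‖((2:ℝ)^j₀) • ω - ζ‖ - G ‖((2:ℝ)^j₀) • ω + ζ‖ :=
      lt_of_le_of_ne (hterm j₀) (fun h => hne (by linarith [h.symm]))
    have := Finset.sum_pos' (fun j _ => hterm j) ⟨j₀, hj₀, hpos⟩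
    exact this.ne'
  · -- symmetric case
    have key' : ∀ (c : ℝ), 0 < c → ‖c • ω + ζ‖ ≤ ‖c • ω - ζ‖ := by
      intro c hcpos
      have h1 := norm_sub_sq_real (c • ω) ζ
      have h2 := norm_add_sq_real (c • ω) ζ
      have h3 : ⟪c • ω, ζ⟫ = c * ⟪ω, ζ⟫ := real_inner_smul_left ω ζ c
      nlinarith [norm_nonneg (c • ω - ζ), norm_nonneg (c • ω + ζ),
        mul_nonneg hcpos.le (neg_nonneg.2 ht)]
    have hterm : ∀ j : ℕ, G ‖((2:ℝ)^j) • ω - ζ‖ - G ‖((2:ℝ)^j) • ω + ζ‖ ≤ 0 := by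
      intro j
      have := key' ((2:ℝ)^j) (by positivity)
      have := hmono (Set.mem_Ici.2 (norm_nonneg _)) (Set.mem_Ici.2 (norm_nonneg _)) this
      linarith
    have hneg : G ‖((2:ℝ)^j₀) • ω - ζ‖ - G ‖((2:ℝ)^j₀) • ω + ζ‖ < 0 :=
      lt_of_le_of_ne (hterm j₀) (fun h => hne (by linarith [h]))
    have hlt : (∑ j ∈ Finset.range J,
        (G ‖((2:ℝ)^j) • ω - ζ‖ - G ‖((2:ℝ)^j) • ω + ζ‖)) < 0 :=
      Finset.sum_neg' (fun j _ => hterm j) ⟨j₀, hj₀, hneg⟩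
    exact hlt.ne

end GaborAux

/-- Summing the odd directional Gabor wavelets over dyadic scales preserves
invertibility of the filter bank `{φ, h, ψ_{j,ζ}}`. -/
theorem summed_gabor_filter_bank_injective
    (G : ℝ → ℝ) (hmono : AntitoneOn G (Set.Ici 0))
    (hGnonneg : ∀ t ∈ Set.Ici (0 : ℝ), 0 ≤ G t)
    (g : EuclideanSpace ℝ (Fin 2) → ℝ) (hg : Integrable g)
    (hFg : ∀ ω : EuclideanSpace ℝ (Fin 2), fourier2 g ω = (G ‖ω‖ : ℂ))
    (Ξ : Finset (EuclideanSpace ℝ (Fin 2))) (J : ℕ)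
    (ψ : ℕ → EuclideanSpace ℝ (Fin 2) → EuclideanSpace ℝ (Fin 2) → ℝ)
    (hψ : ∀ j ζ u, ψ j ζ u
      = ((2 : ℝ) ^ (2 * j))⁻¹ * g (((2 : ℝ) ^ j)⁻¹ • u)
          * Real.sin ⟪ζ, ((2 : ℝ) ^ j)⁻¹ • u⟫)
    (φ hfil : EuclideanSpace ℝ (Fin 2) → ℝ)
    (hφ : Integrable φ) (hh : Integrable hfil)
    (hframe : ∀ ω : EuclideanSpace ℝ (Fin 2),
      0 < ‖fourier2 φ ω‖ ^ 2 + ‖fourier2 hfil ω‖ ^ 2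
            + ∑ j ∈ Finset.range J, ∑ ζ ∈ Ξ, ‖fourier2 (ψ j ζ) ω‖ ^ 2)
    (x y : EuclideanSpace ℝ (Fin 2) → ℝ)
    (hx : Integrable x) (hy : Integrable y)
    (heqφ : ∀ᵐ u : EuclideanSpace ℝ (Fin 2), conv2 x φ u = conv2 y φ u)
    (heqh : ∀ᵐ u : EuclideanSpace ℝ (Fin 2), conv2 x hfil u = conv2 y hfil u)
    (heqψ : ∀ ζ ∈ Ξ, ∀ᵐ u : EuclideanSpace ℝ (Fin 2),
      conv2 x (fun v => ∑ j ∈ Finset.range J, ψ j ζ v) u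
        = conv2 y (fun v => ∑ j ∈ Finset.range J, ψ j ζ v) u) :
    ∀ᵐ u : EuclideanSpace ℝ (Fin 2), x u = y u := by
  classical
  have hψfun : ∀ j ζ, ψ j ζ = fun u => ((2 : ℝ) ^ (2 * j))⁻¹ * g (((2 : ℝ) ^ j)⁻¹ • u)
      * Real.sin ⟪ζ, ((2 : ℝ) ^ j)⁻¹ • u⟫ := fun j ζ => funext (hψ j ζ)
  have hψint : ∀ j ζ, Integrable (ψ j ζ) := fun j ζ => by
    rw [hψfun]; exact GaborAux.integrable_psi hg j ζ
  have hψfour : ∀ j ζ ω, fourier2 (ψ j ζ) ω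
      = (((G ‖((2:ℝ)^j) • ω - ζ‖ : ℝ) : ℂ) - ((G ‖((2:ℝ)^j) • ω + ζ‖ : ℝ) : ℂ))
          / (2 * Complex.I) := by
    intro j ζ ω
    rw [hψfun, GaborAux.fourier2_psi hg, hFg, hFg]
  have hXφ : ∀ ω, fourier2 x ω * fourier2 φ ω = fourier2 y ω * fourier2 φ ω := fun ω => by
    rw [← GaborAux.fourier2_conv2 hx hφ, ← GaborAux.fourier2_conv2 hy hφ]
    exact GaborAux.fourier2_congr_ae heqφ ω
  have hXh : ∀ ω, fourier2 x ω * fourier2 hfil ω = fourier2 y ω * fourier2 hfil ω := fun ω => by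
    rw [← GaborAux.fourier2_conv2 hx hh, ← GaborAux.fourier2_conv2 hy hh]
    exact GaborAux.fourier2_congr_ae heqh ω
  have hXψ : ∀ ζ ∈ Ξ, ∀ ω,
      fourier2 x ω * fourier2 (fun v => ∑ j ∈ Finset.range J, ψ j ζ v) ω
        = fourier2 y ω * fourier2 (fun v => ∑ j ∈ Finset.range J, ψ j ζ v) ω := by
    intro ζ hζ ω
    have hintS : Integrable (fun v => ∑ j ∈ Finset.range J, ψ j ζ v) :=
      integrable_finset_sum _ (fun j _ => hψint j ζ)
    rw [← GaborAux.fourier2_conv2 hx hintS, ← GaborAux.fourier2_conv2 hy hintS]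
    exact GaborAux.fourier2_congr_ae (heqψ ζ hζ) ω
  have key : ∀ ω, fourier2 x ω = fourier2 y ω := by
    intro ω
    by_cases h1 : fourier2 φ ω = 0
    case neg => exact mul_right_cancel₀ h1 (hXφ ω)
    by_cases h2 : fourier2 hfil ω = 0
    case neg => exact mul_right_cancel₀ h2 (hXh ω)
    have hex : ∃ ζ ∈ Ξ, ∃ j ∈ Finset.range J, fourier2 (ψ j ζ) ω ≠ 0 := by
      by_contra hcon
      push_neg at hcon
      have hfr := hframe ω
      have hzero : ∑ j ∈ Finset.range J, ∑ ζ ∈ Ξ, ‖fourier2 (ψ j ζ) ω‖ ^ 2 = 0 :=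
        Finset.sum_eq_zero fun j hj => Finset.sum_eq_zero fun ζ hζ => by
          rw [hcon ζ hζ j hj]; simp
      rw [h1, h2, hzero] at hfr
      simp at hfr
    obtain ⟨ζ, hζΞ, j₀, hj₀, hne0⟩ := hex
    have hSval : fourier2 (fun v => ∑ j ∈ Finset.range J, ψ j ζ v) ω
        = ((∑ j ∈ Finset.range J,
            (G ‖((2:ℝ)^j) • ω - ζ‖ - G ‖((2:ℝ)^j) • ω + ζ‖) : ℝ) : ℂ)
          / (2 * Complex.I) := by
      rw [GaborAux.fourier2_finset_sum _ _ (fun j _ => hψint j ζ)]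
      simp only [hψfour]
      rw [← Finset.sum_div]
      congr 1
      push_cast
      rfl
    have haneb : G ‖((2:ℝ)^j₀) • ω - ζ‖ ≠ G ‖((2:ℝ)^j₀) • ω + ζ‖ := by
      intro h
      apply hne0
      rw [hψfour j₀ ζ ω, h]
      simp
    have hsum_ne := GaborAux.sum_sign hmono J ω ζ j₀ hj₀ haneb
    have hS_ne : fourier2 (fun v => ∑ j ∈ Finset.range J, ψ j ζ v) ω ≠ 0 := by
      rw [hSval]
      apply div_ne_zero
      · exact_mod_cast hsum_ne
      · simp [Complex.I_ne_zero]
    exact mul_right_cancel₀ hS_ne (hXψ ζ hζΞ ω)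
  have hdiff : ∀ᵐ u : EuclideanSpace ℝ (Fin 2), (fun u => x u - y u) u = 0 := by
    apply GaborAux.ae_zero_of_fourier_zero (f := fun u => x u - y u) (hx.sub hy)
    intro w
    have := GaborAux.fourierIntegral_eq_fourier2 (fun u => x u - y u) w
    rw [this, GaborAux.fourier2_sub hx hy, key]
    ring
  filter_upwards [hdiff] with u hu
  have : x u - y u = 0 := hu
  linarith
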